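/- Let (L, W) be a reflection lattice equipped with a compatible family of strict markings: for each reflection σ ∈ W a strict marking (b_σ, β_σ), such that for every w ∈ W and every reflection σ ∈ W one has (w(b_σ), β_σ ∘ w⁻¹) = ±(b_{wσw⁻¹}, β_{wσw⁻¹}). Set R = {b_σ : σ a reflection in W} ∪ {−b_σ : σ a reflection in W}. Then there is a well-defined function assigning to each r ∈ R a homomorphism n_r : L → ℤ such that n_{b_σ} = β_σ and n_{−b_σ} = −β_σ for every reflection σ ∈ W, and (R, {n_r}) is a root system in L, i.e. it satisfies axioms (R1)–(R4). -/
import Mathlib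


open scoped TensorProduct

/-- A reflection on a lattice: an automorphism of order dividing 2 whose
`(−1)`-eigenlattice has rank 1. -/
def IsReflectionE {L : Type*} [AddCommGroup L] (σ : L ≃ₗ[ℤ] L) : Prop :=
  σ * σ = 1 ∧
    Module.finrank ℤ
      (LinearMap.ker ((LinearMap.id : L →ₗ[ℤ] L) + (σ : L →ₗ[ℤ] L))) = 1

/-- A root system in a lattice `L`: a finite set `R` of roots together with coroots
`n r : L →ₗ[ℤ] ℤ` satisfying (R1): `R` and `⋂_{r∈R} ker (n r)` span `ℚ ⊗ L`;
(R2): `n r r = −2`; (R3): reducedness; (R4): closure under the reflections. -/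
def IsRootSystem {L : Type*} [AddCommGroup L] (R : Set L) (n : L → (L →ₗ[ℤ] ℤ)) : Prop :=
  R.Finite ∧
  Submodule.span ℚ
      (⇑(TensorProduct.mk ℤ ℚ L 1) '' (R ∪ {y : L | ∀ r ∈ R, n r y = 0})) = ⊤ ∧
  (∀ r ∈ R, n r r = -2) ∧
  (∀ r ∈ R, ∀ k : ℤ, k • r ∈ R → k = 1 ∨ k = -1) ∧
  (∀ r ∈ R, ∀ t ∈ R, t + n r t • r ∈ R)

/-- a reflection lattice with a compatible family of strict markings
`(b σ, β σ)` determines a root system with roots `{± b σ}` and coroots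
`n (b σ) = β σ`, `n (−b σ) = −β σ`. -/

theorem refl_ne_one {L : Type*} [AddCommGroup L] [Module.Free ℤ L] [Module.Finite ℤ L]
    (σ : L ≃ₗ[ℤ] L) (hσ : IsReflectionE σ) : σ ≠ 1 := by
  rintro rfl
  have h := hσ.2
  have hker : LinearMap.ker ((LinearMap.id : L →ₗ[ℤ] L) + ((1 : L ≃ₗ[ℤ] L) : L →ₗ[ℤ] L)) = ⊥ := by
    ext x
    simp only [LinearMap.mem_ker, LinearMap.add_apply, LinearMap.id_apply, Submodule.mem_bot,
      LinearEquiv.coe_coe, LinearEquiv.coe_one, id_eq]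
    constructor
    · intro hx
      have h2 : (2 : ℤ) • x = 0 := by rw [two_smul]; exact hx
      exact (smul_eq_zero.mp h2).resolve_left (by norm_num)
    · rintro rfl; simp
  rw [hker, finrank_bot] at h
  exact absurd h (by norm_num)

theorem refl_exists {L : Type*} [AddCommGroup L] [Module.Free ℤ L] [Module.Finite ℤ L]
    (σ : L ≃ₗ[ℤ] L) (hσ : IsReflectionE σ) (b : L) (β : L →ₗ[ℤ] ℤ)
    (hmark : ∀ x : L, σ x = x + β x • b) : ∃ x, β x • b ≠ 0 := by
  by_contra hc
  push_neg at hc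
  exact refl_ne_one σ hσ (LinearEquiv.ext fun x => by rw [hmark x, hc x, add_zero]; rfl)

theorem refl_bne {L : Type*} [AddCommGroup L] [Module.Free ℤ L] [Module.Finite ℤ L]
    (σ : L ≃ₗ[ℤ] L) (hσ : IsReflectionE σ) (b : L) (β : L →ₗ[ℤ] ℤ)
    (hmark : ∀ x : L, σ x = x + β x • b) : b ≠ 0 := by
  obtain ⟨x, hx⟩ := refl_exists σ hσ b β hmark
  intro h; exact hx (by rw [h, smul_zero])

theorem refl_beta_b {L : Type*} [AddCommGroup L] [Module.Free ℤ L] [Module.Finite ℤ L]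
    (σ : L ≃ₗ[ℤ] L) (hσ : IsReflectionE σ) (b : L) (β : L →ₗ[ℤ] ℤ)
    (hmark : ∀ x : L, σ x = x + β x • b) : β b = -2 := by
  obtain ⟨x, hx⟩ := refl_exists σ hσ b β hmark
  have hbne : b ≠ 0 := fun h => hx (by rw [h, smul_zero])
  have hβx : β x ≠ 0 := fun h => hx (by rw [h, zero_smul])
  have h3 : σ (σ x) = x := DFunLike.congr_fun hσ.1 x
  rw [hmark (σ x), hmark x] at h3
  have h4 : (β x * (2 + β b)) • b = 0 := by
    have h5 : β (x + β x • b) = β x + β x * β b := by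
      rw [map_add, map_smul, smul_eq_mul]
    rw [h5] at h3
    rw [add_assoc] at h3
    have h6 : β x • b + (β x + β x * β b) • b = 0 := add_eq_left.mp h3
    calc (β x * (2 + β b)) • b = (β x + (β x + β x * β b)) • b := by ring_nf
      _ = β x • b + (β x + β x * β b) • b := add_smul _ _ _
      _ = 0 := h6
  have h7 : β x * (2 + β b) = 0 := (smul_eq_zero.mp h4).resolve_right hbne
  have h8 : (2 + β b) = 0 := (mul_eq_zero.mp h7).resolve_left hβx
  omega

theorem refl_sigma_b {L : Type*} [AddCommGroup L] [Module.Free ℤ L] [Module.Finite ℤ L]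
    (σ : L ≃ₗ[ℤ] L) (hσ : IsReflectionE σ) (b : L) (β : L →ₗ[ℤ] ℤ)
    (hmark : ∀ x : L, σ x = x + β x • b) : σ b = -b := by
  rw [hmark b, refl_beta_b σ hσ b β hmark]
  module

theorem key_lemma {L : Type*} [AddCommGroup L] [Module.Free ℤ L] [Module.Finite ℤ L]
    (W : Subgroup (L ≃ₗ[ℤ] L)) (hWfin : (W : Set (L ≃ₗ[ℤ] L)).Finite)
    (σ τ : L ≃ₗ[ℤ] L) (hσW : σ ∈ W) (hτW : τ ∈ W)
    (hσ : IsReflectionE σ) (hτ : IsReflectionE τ)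
    (bσ bτ : L) (βσ βτ : L →ₗ[ℤ] ℤ)
    (hmσ : ∀ x : L, σ x = x + βσ x • bσ) (hmτ : ∀ x : L, τ x = x + βτ x • bτ)
    (k : ℤ) (hbτ : bτ = k • bσ) : σ = τ := by
  have hbσne : bσ ≠ 0 := refl_bne σ hσ bσ βσ hmσ
  have hβσb : βσ bσ = -2 := refl_beta_b σ hσ bσ βσ hmσ
  have hβτb : βτ bτ = -2 := refl_beta_b τ hτ bτ βτ hmτ
  have hσb : σ bσ = -bσ := refl_sigma_b σ hσ bσ βσ hmσ
  have hc : k * βτ bσ = -2 := by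
    rw [hbτ, map_smul, smul_eq_mul] at hβτb; exact hβτb
  set γ : L →ₗ[ℤ] ℤ := βσ - k • βτ with hγ
  have hγb : γ bσ = 0 := by
    simp only [hγ, LinearMap.sub_apply, LinearMap.smul_apply, smul_eq_mul, hβσb, hc]
    ring
  have happ : ∀ x, (σ * τ) x = x + γ x • bσ := by
    intro x
    show σ (τ x) = _
    rw [hmτ x, map_add, map_smul, hmσ x, hbτ, map_smul, hσb]
    simp only [hγ, LinearMap.sub_apply, LinearMap.smul_apply, smul_eq_mul]
    module
  have hγapp : ∀ x, γ (x + γ x • bσ) = γ x := by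
    intro x; rw [map_add, map_smul, hγb, smul_zero, add_zero]
  have hpow : ∀ m : ℕ, ∀ x, ((σ * τ) ^ m) x = x + ((m : ℤ) * γ x) • bσ := by
    intro m
    induction m with
    | zero => intro x; simp
    | succ m ih =>
      intro x
      rw [pow_succ]
      show ((σ * τ) ^ m) ((σ * τ) x) = _
      rw [happ x, ih, hγapp]
      push_cast
      module
  haveI : Finite (W : Set (L ≃ₗ[ℤ] L)) := hWfin.to_subtype
  haveI : Finite W := this
  set g : W := ⟨σ * τ, mul_mem hσW hτW⟩ with hg
  obtain ⟨m, hm, hgm⟩ : ∃ m : ℕ, 0 < m ∧ g ^ m = 1 :=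
    ⟨orderOf g, (isOfFinOrder_of_finite g).orderOf_pos, pow_orderOf_eq_one g⟩
  have hgm' : (σ * τ) ^ m = 1 := by
    have := congrArg (Subtype.val) hgm
    simpa [hg] using this
  have hγ0 : ∀ x, γ x = 0 := by
    intro x
    have h1 : x + ((m : ℤ) * γ x) • bσ = x := by
      rw [← hpow m x, hgm']; rfl
    have h2 : ((m : ℤ) * γ x) • bσ = 0 := add_eq_left.mp h1
    have h3 : (m : ℤ) * γ x = 0 := (smul_eq_zero.mp h2).resolve_right hbσne
    have : (m : ℤ) ≠ 0 := Int.natCast_ne_zero.mpr hm.ne'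
    exact (mul_eq_zero.mp h3).resolve_left this
  have hβeq : ∀ x, βσ x = k * βτ x := by
    intro x
    have := hγ0 x
    simp only [hγ, LinearMap.sub_apply, LinearMap.smul_apply, smul_eq_mul] at this
    linarith
  apply LinearEquiv.ext
  intro x
  rw [hmσ x, hmτ x, hβeq x, hbτ, smul_smul, mul_comm]

theorem conj_refl {L : Type*} [AddCommGroup L] [Module.Free ℤ L] [Module.Finite ℤ L]
    (w σ : L ≃ₗ[ℤ] L) (hσ : IsReflectionE σ) : IsReflectionE (w * σ * w⁻¹) := by
  constructor
  · have : w * σ * w⁻¹ * (w * σ * w⁻¹) = w * (σ * σ) * w⁻¹ := by group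
    rw [this, hσ.1]; group
  · have hker : LinearMap.ker ((LinearMap.id : L →ₗ[ℤ] L) + ((w * σ * w⁻¹ : L ≃ₗ[ℤ] L) : L →ₗ[ℤ] L))
        = Submodule.map (w : L →ₗ[ℤ] L)
            (LinearMap.ker ((LinearMap.id : L →ₗ[ℤ] L) + (σ : L →ₗ[ℤ] L))) := by
      ext x
      simp only [LinearMap.mem_ker, LinearMap.add_apply, LinearMap.id_apply,
        LinearEquiv.coe_coe, Submodule.mem_map]
      constructor
      · intro hx
        refine ⟨w⁻¹ x, ?_, ?_⟩
        · have h1 : w (w⁻¹ x + σ (w⁻¹ x)) = 0 := by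
            rw [map_add]
            have : w (w⁻¹ x) = x := by
              have : (w * w⁻¹) x = x := by rw [mul_inv_cancel]; rfl
              exact this
            rw [this]
            show x + (w * σ * w⁻¹) x = 0  -- this may not be defeq; check
            exact hx
          have h2 := w.injective (by rw [h1, map_zero] : w (w⁻¹ x + σ (w⁻¹ x)) = w 0)
          exact h2
        · have : (w * w⁻¹) x = x := by rw [mul_inv_cancel]; rfl
          exact this
      · rintro ⟨y, hy, rfl⟩
        have : (w * σ * w⁻¹) (w y) = w (σ y) := by
          show w (σ (w⁻¹ (w y))) = w (σ y)
          have h : w⁻¹ (w y) = y := by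
            have : (w⁻¹ * w) y = y := by rw [inv_mul_cancel]; rfl
            exact this
          rw [h]
        rw [this, ← map_add, hy, map_zero]
    rw [hker, LinearEquiv.finrank_map_eq w, hσ.2]

theorem stmt4 (L : Type*) [AddCommGroup L] [Module.Free ℤ L] [Module.Finite ℤ L]
    (W : Subgroup (L ≃ₗ[ℤ] L)) (hWfin : (W : Set (L ≃ₗ[ℤ] L)).Finite)
    (hgen : Subgroup.closure {σ : L ≃ₗ[ℤ] L | σ ∈ W ∧ IsReflectionE σ} = W)
    (b : (L ≃ₗ[ℤ] L) → L) (β : (L ≃ₗ[ℤ] L) → (L →ₗ[ℤ] ℤ))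
    (hmark : ∀ σ ∈ W, IsReflectionE σ → ∀ x : L, σ x = x + β σ x • b σ)
    (hcompat : ∀ w ∈ W, ∀ σ ∈ W, IsReflectionE σ →
      (w (b σ) = b (w * σ * w⁻¹) ∧
        (β σ) ∘ₗ ((w⁻¹ : L ≃ₗ[ℤ] L) : L →ₗ[ℤ] L) = β (w * σ * w⁻¹)) ∨
      (w (b σ) = -b (w * σ * w⁻¹) ∧
        (β σ) ∘ₗ ((w⁻¹ : L ≃ₗ[ℤ] L) : L →ₗ[ℤ] L) = -β (w * σ * w⁻¹))) :
    ∃ n : L → (L →ₗ[ℤ] ℤ),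
      (∀ σ ∈ W, IsReflectionE σ → n (b σ) = β σ ∧ n (-b σ) = -β σ) ∧
      IsRootSystem {r : L | ∃ σ ∈ W, IsReflectionE σ ∧ (r = b σ ∨ r = -b σ)} n := by
  classical
  set RR : Set L := {r : L | ∃ σ ∈ W, IsReflectionE σ ∧ (r = b σ ∨ r = -b σ)} with hRR
  have hbne : ∀ σ ∈ W, IsReflectionE σ → b σ ≠ 0 :=
    fun σ hσW hσ => refl_bne σ hσ _ _ (hmark σ hσW hσ)
  have hβb : ∀ σ ∈ W, IsReflectionE σ → β σ (b σ) = -2 :=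
    fun σ hσW hσ => refl_beta_b σ hσ _ _ (hmark σ hσW hσ)
  have hkey : ∀ σ ∈ W, ∀ τ ∈ W, IsReflectionE σ → IsReflectionE τ →
      ∀ k : ℤ, b τ = k • b σ → σ = τ :=
    fun σ hσW τ hτW hσ hτ k hk => key_lemma W hWfin σ τ hσW hτW hσ hτ (b σ) (b τ) (β σ) (β τ)
      (hmark σ hσW hσ) (hmark τ hτW hτ) k hk
  have hk1 : ∀ σ ∈ W, ∀ τ ∈ W, IsReflectionE σ → IsReflectionE τ →
      ∀ k : ℤ, b τ = k • b σ → k = 1 := by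
    intro σ hσW τ hτW hσ hτ k hk
    have hστ := hkey σ hσW τ hτW hσ hτ k hk
    rw [← hστ] at hk
    have h2 : (k - 1) • b σ = 0 := by rw [sub_smul, one_smul, ← hk, sub_self]
    have h3 := (smul_eq_zero.mp h2).resolve_right (hbne σ hσW hσ)
    omega
  -- construction of n
  obtain ⟨n, hn1, hn2⟩ : ∃ n : L → (L →ₗ[ℤ] ℤ),
      (∀ σ ∈ W, IsReflectionE σ → n (b σ) = β σ) ∧
      (∀ σ ∈ W, IsReflectionE σ → n (-b σ) = -β σ) := by
    refine ⟨fun r =>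
      if h : ∃ σ, (σ ∈ W ∧ IsReflectionE σ) ∧ r = b σ then β h.choose
      else if h2 : ∃ σ, (σ ∈ W ∧ IsReflectionE σ) ∧ r = -b σ then -β h2.choose
      else 0, ?_, ?_⟩
    · intro σ hσW hσ
      have hex : ∃ τ, (τ ∈ W ∧ IsReflectionE τ) ∧ b σ = b τ := ⟨σ, ⟨hσW, hσ⟩, rfl⟩
      simp only [dif_pos hex]
      obtain ⟨⟨hτW, hτ⟩, hbe⟩ := hex.choose_spec
      have hστ := hkey σ hσW _ hτW hσ hτ 1 (by rw [one_smul]; exact hbe.symm)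
      rw [← hστ]
    · intro σ hσW hσ
      have hne : ¬ (∃ τ, (τ ∈ W ∧ IsReflectionE τ) ∧ -b σ = b τ) := by
        rintro ⟨τ, ⟨hτW, hτ⟩, hbe⟩
        have := hk1 σ hσW τ hτW hσ hτ (-1) (by rw [neg_one_smul]; exact hbe.symm)
        omega
      have hex : ∃ τ, (τ ∈ W ∧ IsReflectionE τ) ∧ -b σ = -b τ := ⟨σ, ⟨hσW, hσ⟩, rfl⟩
      simp only [dif_neg hne, dif_pos hex]
      obtain ⟨⟨hτW, hτ⟩, hbe⟩ := hex.choose_spec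
      have hbe' : b hex.choose = b σ := by
        have := neg_inj.mp hbe; exact this.symm
      have hστ := hkey σ hσW _ hτW hσ hτ 1 (by rw [one_smul]; exact hbe')
      rw [← hστ]
  -- stability of RR
  have hRstab : ∀ u ∈ W, ∀ r ∈ RR, u r ∈ RR := by
    rintro u hu r ⟨σ, hσW, hσ, (rfl | rfl)⟩
    · rcases hcompat u hu σ hσW hσ with ⟨h, -⟩ | ⟨h, -⟩
      · exact ⟨u * σ * u⁻¹, mul_mem (mul_mem hu hσW) (inv_mem hu),
          conj_refl u σ hσ, Or.inl h⟩
      · exact ⟨u * σ * u⁻¹, mul_mem (mul_mem hu hσW) (inv_mem hu),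
          conj_refl u σ hσ, Or.inr h⟩
    · rw [map_neg]
      rcases hcompat u hu σ hσW hσ with ⟨h, -⟩ | ⟨h, -⟩
      · exact ⟨u * σ * u⁻¹, mul_mem (mul_mem hu hσW) (inv_mem hu),
          conj_refl u σ hσ, Or.inr (by rw [h])⟩
      · exact ⟨u * σ * u⁻¹, mul_mem (mul_mem hu hσW) (inv_mem hu),
          conj_refl u σ hσ, Or.inl (by rw [h, neg_neg])⟩
  refine ⟨n, fun σ hσW hσ => ⟨hn1 σ hσW hσ, hn2 σ hσW hσ⟩, ?_, ?_, ?_, ?_, ?_⟩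
  -- (finiteness)
  · apply Set.Finite.subset ((hWfin.image b).union (hWfin.image (fun σ => -b σ)))
    rintro r ⟨σ, hσW, hσ, (rfl | rfl)⟩
    · exact Or.inl ⟨σ, hσW, rfl⟩
    · exact Or.inr ⟨σ, hσW, rfl⟩
  -- (R1)
  · have hβ0 : ∀ σ ∈ W, IsReflectionE σ → ∀ y : L, σ y = y → β σ y = 0 := by
      intro σ hσW hσ y hy
      have h := hmark σ hσW hσ y
      rw [hy] at h
      have h2 : β σ y • b σ = 0 := (add_eq_left.mp h.symm)
      have h3 := (smul_eq_zero.mp h2).resolve_right (hbne σ hσW hσ)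
      exact h3
    have hKmem : ∀ y : L, (∀ u ∈ W, u y = y) → (∀ r ∈ RR, n r y = 0) := by
      rintro y hy r ⟨σ, hσW, hσ, (rfl | rfl)⟩
      · rw [hn1 σ hσW hσ]; exact hβ0 σ hσW hσ y (hy σ hσW)
      · rw [hn2 σ hσW hσ, LinearMap.neg_apply, hβ0 σ hσW hσ y (hy σ hσW), neg_zero]
    have hspanZ : ∀ u ∈ W, ∀ x : L, x - u x ∈ Submodule.span ℤ RR := by
      set M : Subgroup (L ≃ₗ[ℤ] L) :=
        { carrier := {u | u ∈ W ∧ ∀ x : L, x - u x ∈ Submodule.span ℤ RR}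
          one_mem' := ⟨one_mem W, fun x => by simp⟩
          mul_mem' := by
            rintro u v ⟨huW, hu⟩ ⟨hvW, hv⟩
            refine ⟨mul_mem huW hvW, fun x => ?_⟩
            have h1 : x - (u * v) x = (x - u x) + u (x - v x) := by
              show x - u (v x) = _
              rw [map_sub]; abel
            rw [h1]
            refine add_mem (hu x) ?_
            have h2 : (u : L →ₗ[ℤ] L) (x - v x) ∈
                Submodule.map (u : L →ₗ[ℤ] L) (Submodule.span ℤ RR) :=
              Submodule.mem_map_of_mem (hv x)
            rw [Submodule.map_span] at h2
            have hsub : (u : L →ₗ[ℤ] L) '' RR ⊆ RR := by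
              rintro - ⟨r, hr, rfl⟩
              exact hRstab u huW r hr
            have := Submodule.span_mono hsub h2
            simpa using this
          inv_mem' := by
            rintro u ⟨huW, hu⟩
            refine ⟨inv_mem huW, fun x => ?_⟩
            have h := hu (u⁻¹ x)
            have h2 : u (u⁻¹ x) = x := by
              have : (u * u⁻¹) x = x := by rw [mul_inv_cancel]; rfl
              exact this
            rw [h2] at h
            have h3 := neg_mem h
            rwa [neg_sub] at h3 }
      have hWM : W ≤ M := by
        rw [← hgen]
        refine (Subgroup.closure_le M).mpr ?_
        rintro σ ⟨hσW, hσ⟩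
        refine ⟨hσW, fun x => ?_⟩
        have heq : x - σ x = -(β σ x • b σ) := by
          rw [hmark σ hσW hσ x]; abel
        rw [heq]
        exact neg_mem (Submodule.smul_mem _ _
          (Submodule.subset_span ⟨σ, hσW, hσ, Or.inl rfl⟩))
      exact fun u hu => (hWM hu).2
    rw [eq_top_iff]
    rintro v -
    have hbase : ∀ x : L,
        (TensorProduct.mk ℤ ℚ L 1) x ∈
          Submodule.span ℚ
            (⇑(TensorProduct.mk ℤ ℚ L 1) '' (RR ∪ {y : L | ∀ r ∈ RR, n r y = 0})) := by
      intro x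
      set S := Submodule.span ℚ
          (⇑(TensorProduct.mk ℤ ℚ L 1) '' (RR ∪ {y : L | ∀ r ∈ RR, n r y = 0})) with hS
      set F := hWfin.toFinset with hF
      have hmemF : ∀ z : L ≃ₗ[ℤ] L, z ∈ F ↔ z ∈ W := fun z => hWfin.mem_toFinset
      have h1W : (1 : L ≃ₗ[ℤ] L) ∈ F := (hmemF 1).mpr (one_mem W)
      set y := ∑ w ∈ F, w x with hy
      have hyfix : ∀ u ∈ W, u y = y := by
        intro u hu
        rw [hy, map_sum]
        refine Finset.sum_bij' (fun w _ => u * w) (fun w _ => u⁻¹ * w) ?_ ?_ ?_ ?_ ?_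
        · intro w hw
          exact (hmemF _).mpr (mul_mem hu ((hmemF w).mp hw))
        · intro w hw
          exact (hmemF _).mpr (mul_mem (inv_mem hu) ((hmemF w).mp hw))
        · intro w hw; show u⁻¹ * (u * w) = w; group
        · intro w hw; show u * (u⁻¹ * w) = w; group
        · intro w hw; rfl
      have hyK : ∀ r ∈ RR, n r y = 0 := hKmem y hyfix
      have hNQ : ((F.card : ℚ)) ≠ 0 :=
        Nat.cast_ne_zero.mpr (Finset.card_ne_zero_of_mem h1W)
      have hdecomp : (F.card : ℚ) • ((1:ℚ) ⊗ₜ[ℤ] x) =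
          (1:ℚ) ⊗ₜ[ℤ] y + ∑ w ∈ F, (1:ℚ) ⊗ₜ[ℤ] (x - w x) := by
        have hsub : ∑ w ∈ F, (1:ℚ) ⊗ₜ[ℤ] (x - w x) =
            ∑ w ∈ F, ((1:ℚ) ⊗ₜ[ℤ] x - (1:ℚ) ⊗ₜ[ℤ] (w x)) :=
          Finset.sum_congr rfl (fun w _ => TensorProduct.tmul_sub _ _ _)
        rw [hsub, Finset.sum_sub_distrib, Finset.sum_const, hy,
          TensorProduct.tmul_sum, Nat.cast_smul_eq_nsmul]
        abel
      have hy_mem : (1:ℚ) ⊗ₜ[ℤ] y ∈ S :=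
        Submodule.subset_span ⟨y, Or.inr hyK, rfl⟩
      have hterm : ∀ w ∈ F, (1:ℚ) ⊗ₜ[ℤ] (x - w x) ∈ S := by
        intro w hw
        have hz : x - w x ∈ Submodule.span ℤ RR := hspanZ w ((hmemF w).mp hw) x
        refine Submodule.span_induction ?_ ?_ ?_ ?_ hz
        · intro r hr
          exact Submodule.subset_span ⟨r, Or.inl hr, rfl⟩
        · rw [TensorProduct.tmul_zero]; exact zero_mem S
        · intro a c _ _ ha hc
          rw [TensorProduct.tmul_add]; exact add_mem ha hc
        · intro k z _ hz'
          rw [TensorProduct.tmul_smul]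
          rw [← Int.cast_smul_eq_zsmul ℚ]
          exact Submodule.smul_mem S _ hz'
      have hfin : (1:ℚ) ⊗ₜ[ℤ] x =
          (F.card : ℚ)⁻¹ • ((1:ℚ) ⊗ₜ[ℤ] y + ∑ w ∈ F, (1:ℚ) ⊗ₜ[ℤ] (x - w x)) := by
        rw [← hdecomp, smul_smul, inv_mul_cancel₀ hNQ, one_smul]
      show (1:ℚ) ⊗ₜ[ℤ] x ∈ S
      rw [hfin]
      exact Submodule.smul_mem S _ (add_mem hy_mem (Submodule.sum_mem S hterm))
    induction v using TensorProduct.induction_on with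
    | zero => exact zero_mem _
    | tmul q z =>
      have hqz : q ⊗ₜ[ℤ] z = q • ((1:ℚ) ⊗ₜ[ℤ] z) := by
        rw [TensorProduct.smul_tmul', smul_eq_mul, mul_one]
      rw [hqz]
      exact Submodule.smul_mem _ _ (hbase z)
    | add u v hu hv => exact add_mem hu hv
  -- (R2)
  · rintro r ⟨σ, hσW, hσ, (rfl | rfl)⟩
    · rw [hn1 σ hσW hσ]; exact hβb σ hσW hσ
    · rw [hn2 σ hσW hσ, LinearMap.neg_apply, map_neg, neg_neg]; exact hβb σ hσW hσ
  -- (R3)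
  · rintro r ⟨σ, hσW, hσ, (rfl | rfl)⟩ k ⟨τ, hτW, hτ, (hb | hb)⟩
    · exact Or.inl (hk1 σ hσW τ hτW hσ hτ k hb.symm)
    · have h' : b τ = (-k) • b σ := by rw [neg_smul, hb, neg_neg]
      have := hk1 σ hσW τ hτW hσ hτ (-k) h'
      omega
    · have h' : b τ = (-k) • b σ := by rw [neg_smul, ← hb, smul_neg]
      have := hk1 σ hσW τ hτW hσ hτ (-k) h'
      omega
    · have h' : b τ = k • b σ := by
        have h2 : -(k • b σ) = -b τ := by rw [← smul_neg, hb]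
        exact (neg_inj.mp h2).symm
      exact Or.inl (hk1 σ hσW τ hτW hσ hτ k h')
  -- (R4)
  · rintro r ⟨σ, hσW, hσ, hr⟩ t ht
    have hst : t + n r t • r = σ t := by
      rcases hr with rfl | rfl
      · rw [hn1 σ hσW hσ, hmark σ hσW hσ t]
      · rw [hn2 σ hσW hσ, hmark σ hσW hσ t, LinearMap.neg_apply, neg_smul, smul_neg, neg_neg]
    rw [hst]
    exact hRstab σ hσW t ht
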